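/- For all n, m and every k with 2 < k < min{n,m}, the set of n×m probability matrices of nonnegative rank at most k (the mixture of k independence models) is not dense in the set of n×m matrices of ordinary rank at most k intersected with the probability simplex: there exists a probability matrix P with rank(P) = k and rk₊(P) > k which is not the limit of any sequence of matrices Pₙ with rank(Pₙ) = rk₊(Pₙ) = k. -/

import Mathlib

open Matrix BigOperators Filter Topology

def bpat (a b : ℕ) : Prop :=
  (a = 0 ∧ b = 0) ∨ (a = 0 ∧ b = 1) ∨ (a = 1 ∧ b = 0) ∨ (a = 1 ∧ b = 2) ∨
  (a = 2 ∧ b = 1) ∨ (a = 2 ∧ b = 3) ∨ (a = 3 ∧ b = 2) ∨ (a = 3 ∧ b = 3)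

def inSupp (k a b : ℕ) : Prop := bpat a b ∨ (4 ≤ a ∧ a ≤ k ∧ a = b)

open Classical in
noncomputable def Pmat (n m k : ℕ) : Matrix (Fin n) (Fin m) ℝ :=
  Matrix.of fun i j => if inSupp k i.val j.val then ((k : ℝ) + 5)⁻¹ else 0

lemma cpos (k : ℕ) : (0:ℝ) < ((k:ℝ)+5)⁻¹ := by positivity

lemma Pmat_nonneg (n m k : ℕ) (i : Fin n) (j : Fin m) : 0 ≤ Pmat n m k i j := by
  unfold Pmat; simp only [Matrix.of_apply]
  split_ifs
  · exact (cpos k).le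
  · exact le_refl 0

lemma Pmat_pos_of (n m k : ℕ) (i : Fin n) (j : Fin m) (h : inSupp k i.val j.val) :
    Pmat n m k i j = ((k:ℝ)+5)⁻¹ := by
  unfold Pmat; simp only [Matrix.of_apply]; rw [if_pos h]

lemma Pmat_zero_of (n m k : ℕ) (i : Fin n) (j : Fin m) (h : ¬ inSupp k i.val j.val) :
    Pmat n m k i j = 0 := by
  unfold Pmat; simp only [Matrix.of_apply]; rw [if_neg h]

def Bcells : Finset (ℕ × ℕ) := {(0,0),(0,1),(1,0),(1,2),(2,1),(2,3),(3,2),(3,3)}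

lemma no_three_in_row {a b1 b2 b3 : ℕ} (h1 : bpat a b1) (h2 : bpat a b2) (h3 : bpat a b3)
    (d12 : b1 ≠ b2) (d13 : b1 ≠ b3) (d23 : b2 ≠ b3) : False := by
  unfold bpat at h1 h2 h3; omega

lemma no_three_in_col {b a1 a2 a3 : ℕ} (h1 : bpat a1 b) (h2 : bpat a2 b) (h3 : bpat a3 b)
    (d12 : a1 ≠ a2) (d13 : a1 ≠ a3) (d23 : a2 ≠ a3) : False := by
  unfold bpat at h1 h2 h3; omega

lemma no_square {a1 a2 b1 b2 : ℕ} (h11 : bpat a1 b1) (h12 : bpat a1 b2)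
    (h21 : bpat a2 b1) (h22 : bpat a2 b2) (da : a1 ≠ a2) (db : b1 ≠ b2) : False := by
  unfold bpat at h11 h12 h21 h22; omega

lemma count {n m k : ℕ} (h3 : 3 ≤ k) (hn : k < n) (hm : k < m) {k' : ℕ}
    (c : Fin k' → Fin n → ℝ) (r : Fin k' → Fin m → ℝ)
    (hc : ∀ h i, 0 ≤ c h i) (hr : ∀ h j, 0 ≤ r h j)
    (hfact : Pmat n m k = ∑ h, Matrix.vecMulVec (c h) (r h)) : k + 1 ≤ k' := by
  classical
  have hne : (0:ℕ) < n := by omega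
  have hme : (0:ℕ) < m := by omega
  set fi : ℕ → Fin n := fun a => if h : a < n then ⟨a, h⟩ else ⟨0, hne⟩ with hfi
  set fj : ℕ → Fin m := fun a => if h : a < m then ⟨a, h⟩ else ⟨0, hme⟩ with hfj
  have hfiv : ∀ a, a ≤ k → (fi a).val = a := by
    intro a ha; simp only [hfi]; rw [dif_pos (by omega)]
  have hfjv : ∀ a, a ≤ k → (fj a).val = a := by
    intro a ha; simp only [hfj]; rw [dif_pos (by omega)]
  have happ : ∀ (i : Fin n) (j : Fin m), Pmat n m k i j = ∑ h, c h i * r h j := by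
    intro i j
    rw [hfact]
    simp [Matrix.sum_apply, Matrix.vecMulVec_apply]
  have key : ∀ h (i : Fin n) (j : Fin m), 0 < c h i → 0 < r h j → inSupp k i.val j.val := by
    intro h i j hci hrj
    by_contra hns
    have h0 : Pmat n m k i j = 0 := Pmat_zero_of n m k i j hns
    have hle : c h i * r h j ≤ Pmat n m k i j := by
      rw [happ]
      exact Finset.single_le_sum (fun h' _ => mul_nonneg (hc h' i) (hr h' j))
        (Finset.mem_univ h)
    nlinarith
  have cover : ∀ (i : Fin n) (j : Fin m), inSupp k i.val j.val →
      ∃ h, 0 < c h i ∧ 0 < r h j := by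
    intro i j hs
    by_contra hno
    push_neg at hno
    have : Pmat n m k i j = 0 := by
      rw [happ]
      apply Finset.sum_eq_zero
      intro h _
      rcases (hc h i).lt_or_eq with hlt | heq
      · have := hno h hlt
        have h2 : r h j = 0 := le_antisymm this (hr h j)
        rw [h2, mul_zero]
      · rw [← heq, zero_mul]
    rw [Pmat_pos_of n m k i j hs] at this
    exact absurd this (ne_of_gt (cpos k))
  -- set A
  set A : Finset (Fin k') := Finset.univ.filter
    (fun h => ∃ (i : Fin n) (j : Fin m), i.val < 4 ∧ j.val < 4 ∧ 0 < c h i ∧ 0 < r h j) with hA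
  set T : Fin k' → Finset (ℕ × ℕ) := fun h =>
    Bcells.filter (fun p => 0 < c h (fi p.1) ∧ 0 < r h (fj p.2)) with hT
  have hBmem : ∀ p ∈ Bcells, bpat p.1 p.2 ∧ p.1 < 4 ∧ p.2 < 4 := by
    intro p hp
    fin_cases hp <;> simp [bpat]
  have hcover : Bcells ⊆ A.biUnion T := by
    intro p hp
    obtain ⟨hb, h1, h2⟩ := hBmem p hp
    have hsp : inSupp k (fi p.1).val (fj p.2).val := by
      rw [hfiv _ (by omega), hfjv _ (by omega)]; exact Or.inl hb
    obtain ⟨h, hch, hrh⟩ := cover _ _ hsp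
    refine Finset.mem_biUnion.2 ⟨h, ?_, ?_⟩
    · rw [hA, Finset.mem_filter]
      exact ⟨Finset.mem_univ _, fi p.1, fj p.2,
        by rw [hfiv _ (by omega)]; omega, by rw [hfjv _ (by omega)]; omega, hch, hrh⟩
    · rw [hT]; exact Finset.mem_filter.2 ⟨hp, hch, hrh⟩
  have hT2 : ∀ h, (T h).card ≤ 2 := by
    intro h
    by_contra hgt
    push_neg at hgt
    obtain ⟨p, hp, q, hq, s, hs, hpq, hps, hqs⟩ := Finset.two_lt_card.1 hgt
    rw [hT, Finset.mem_filter] at hp hq hs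
    obtain ⟨hpB, hpc, hpr⟩ := hp
    obtain ⟨hqB, hqc, hqr⟩ := hq
    obtain ⟨hsB, hsc, hsr⟩ := hs
    obtain ⟨_, hp1, hp2⟩ := hBmem p hpB
    obtain ⟨_, hq1, hq2⟩ := hBmem q hqB
    obtain ⟨_, hs1, hs2⟩ := hBmem s hsB
    have cross : ∀ (a b : ℕ), a < 4 → b < 4 → 0 < c h (fi a) → 0 < r h (fj b) → bpat a b := by
      intro a b ha hb hca hrb
      have := key h (fi a) (fj b) hca hrb
      rw [hfiv _ (by omega), hfjv _ (by omega)] at this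
      rcases this with h1 | h1
      · exact h1
      · omega
    have c11 := cross _ _ hp1 hp2 hpc hpr
    have c12 := cross _ _ hp1 hq2 hpc hqr
    have c13 := cross _ _ hp1 hs2 hpc hsr
    have c21 := cross _ _ hq1 hp2 hqc hpr
    have c22 := cross _ _ hq1 hq2 hqc hqr
    have c23 := cross _ _ hq1 hs2 hqc hsr
    have c31 := cross _ _ hs1 hp2 hsc hpr
    have c32 := cross _ _ hs1 hq2 hsc hqr
    have c33 := cross _ _ hs1 hs2 hsc hsr
    have hpq' : p.1 ≠ q.1 ∨ p.2 ≠ q.2 := by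
      by_contra hcon; push_neg at hcon
      exact hpq (Prod.ext hcon.1 hcon.2)
    have hps' : p.1 ≠ s.1 ∨ p.2 ≠ s.2 := by
      by_contra hcon; push_neg at hcon
      exact hps (Prod.ext hcon.1 hcon.2)
    have hqs' : q.1 ≠ s.1 ∨ q.2 ≠ s.2 := by
      by_contra hcon; push_neg at hcon
      exact hqs (Prod.ext hcon.1 hcon.2)
    by_cases e1 : p.1 = q.1
    · by_cases e2 : p.1 = s.1
      · have eq' : q.1 = s.1 := by omega
        have d1 : p.2 ≠ q.2 := by
          rcases hpq' with h' | h'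
          · exact absurd e1 h'
          · exact h'
        have d2 : p.2 ≠ s.2 := by
          rcases hps' with h' | h'
          · exact absurd e2 h'
          · exact h'
        have d3 : q.2 ≠ s.2 := by
          rcases hqs' with h' | h'
          · exact absurd eq' h'
          · exact h'
        exact no_three_in_row c11 c12 c13 d1 d2 d3
      · by_cases e4 : p.2 = s.2
        · have d1 : p.2 ≠ q.2 := by
            rcases hpq' with h' | h'
            · exact absurd e1 h'
            · exact h'
          exact no_square c11 c12 c31 c32 e2 d1
        · exact no_square c11 c13 c31 c33 e2 e4
    · by_cases e3 : p.2 = q.2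
      · by_cases e4 : p.2 = s.2
        · have d2 : p.1 ≠ s.1 := by
            rcases hps' with h' | h'
            · exact h'
            · exact absurd e4 h'
          have d3 : q.1 ≠ s.1 := by
            rcases hqs' with h' | h'
            · exact h'
            · exact absurd (by omega : q.2 = s.2) h'
          exact no_three_in_col c11 c21 c31 e1 d2 d3
        · exact no_square c11 c13 c21 c23 e1 e4
      · exact no_square c11 c12 c21 c22 e1 e3
  have hAcard : 4 ≤ A.card := by
    have h8 : Bcells.card = 8 := by decide
    have h1 : Bcells.card ≤ (A.biUnion T).card := Finset.card_le_card hcover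
    have h2 : (A.biUnion T).card ≤ ∑ h ∈ A, (T h).card := Finset.card_biUnion_le
    have h3' : ∑ h ∈ A, (T h).card ≤ A.card * 2 := by
      calc ∑ h ∈ A, (T h).card ≤ ∑ _h ∈ A, 2 := Finset.sum_le_sum (fun h _ => hT2 h)
      _ = A.card * 2 := by rw [Finset.sum_const, smul_eq_mul]
    omega
  -- the diagonal dyads
  have hsel : ∀ a ∈ Finset.Icc 4 k, ∃ h, 0 < c h (fi a) ∧ 0 < r h (fj a) := by
    intro a ha
    rw [Finset.mem_Icc] at ha
    apply cover
    rw [hfiv _ (by omega), hfjv _ (by omega)]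
    exact Or.inr ⟨ha.1, ha.2, rfl⟩
  choose sel hsel1 hsel2 using hsel
  set D : Finset (Fin k') := (Finset.Icc 4 k).attach.image (fun a => sel a.1 a.2) with hD
  have hinj : Function.Injective (fun a : {x // x ∈ Finset.Icc 4 k} => sel a.1 a.2) := by
    intro a b hab
    simp only at hab
    have h1 := hsel1 a.1 a.2
    have h2 := hsel2 b.1 b.2
    rw [hab] at h1
    have := key _ _ _ h1 h2
    have ha4 : 4 ≤ a.1 ∧ a.1 ≤ k := Finset.mem_Icc.1 a.2
    have hb4 : 4 ≤ b.1 ∧ b.1 ≤ k := Finset.mem_Icc.1 b.2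
    rw [hfiv _ (by omega), hfjv _ (by omega)] at this
    have hab' : a.1 = b.1 := by
      rcases this with h1' | h1'
      · unfold bpat at h1'; omega
      · omega
    exact Subtype.ext hab'
  have hDcard : D.card = k - 3 := by
    rw [hD, Finset.card_image_of_injective _ hinj, Finset.card_attach, Nat.card_Icc]
    omega
  have hdisj : Disjoint A D := by
    rw [Finset.disjoint_left]
    intro h hhA hhD
    rw [hD, Finset.mem_image] at hhD
    obtain ⟨a, _, hae⟩ := hhD
    have ha4 : 4 ≤ a.1 ∧ a.1 ≤ k := Finset.mem_Icc.1 a.2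
    have h2 := hsel2 a.1 a.2
    rw [hae] at h2
    rw [hA, Finset.mem_filter] at hhA
    obtain ⟨_, i, j, hi4, hj4, hci, hrj⟩ := hhA
    have := key h i (fj a.1) hci h2
    rw [hfjv _ (by omega)] at this
    rcases this with h1' | h1'
    · unfold bpat at h1'; omega
    · omega
  have hfinal : A.card + D.card ≤ k' := by
    rw [← Finset.card_union_of_disjoint hdisj]
    calc (A ∪ D).card ≤ Finset.univ.card := Finset.card_le_univ _
    _ = k' := by rw [Finset.card_univ, Fintype.card_fin]
  omega

lemma sum_ite_fin {k : ℕ} (x : ℕ) (hx : x < k) (f : Fin k → ℝ) :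
    ∑ t : Fin k, (if t.val = x then f t else 0) = f ⟨x, hx⟩ := by
  rw [Finset.sum_eq_single (⟨x, hx⟩ : Fin k)]
  · simp
  · intro b _ hb
    rw [if_neg]
    intro hv
    exact hb (Fin.ext hv)
  · intro h
    exact absurd (Finset.mem_univ _) h

lemma sum_ite_range (x y : ℕ) (hxy : x ≤ y) (cst : ℝ) :
    ∑ t ∈ Finset.range y, (if t = x then cst else 0) = if x < y then cst else 0 := by
  rw [Finset.sum_ite_eq' (Finset.range y) x (fun _ => cst)]
  simp [Finset.mem_range]

lemma Pmat_sum (n m k : ℕ) (h3 : 3 ≤ k) (hn : k < n) (hm : k < m) :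
    ∑ i, ∑ j, Pmat n m k i j = 1 := by
  classical
  set cc : ℝ := ((k:ℝ)+5)⁻¹ with hcc
  have rowsum : ∀ i : Fin n, ∑ j, Pmat n m k i j =
      (if i.val < 4 then 2*cc else if i.val ≤ k then cc else 0) := by
    intro i
    set a := i.val with ha
    have hPa : ∀ j : Fin m, Pmat n m k i j = if inSupp k a j.val then cc else 0 := by
      intro j; unfold Pmat; simp only [Matrix.of_apply]; rfl
    by_cases h4 : a < 4
    · -- row in B block: two cells
      obtain ⟨x, y, _, hx4, hy4, hrow⟩ :
          ∃ x y : ℕ, x ≠ y ∧ x < 4 ∧ y < 4 ∧ ∀ b : ℕ, (inSupp k a b ↔ (b = x ∨ b = y)) := by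
        interval_cases a
        · exact ⟨0, 1, by omega, by omega, by omega, by intro b; unfold inSupp bpat; omega⟩
        · exact ⟨0, 2, by omega, by omega, by omega, by intro b; unfold inSupp bpat; omega⟩
        · exact ⟨1, 3, by omega, by omega, by omega, by intro b; unfold inSupp bpat; omega⟩
        · exact ⟨2, 3, by omega, by omega, by omega, by intro b; unfold inSupp bpat; omega⟩
      have : ∀ j : Fin m, Pmat n m k i j =
          (if j.val = x then cc else 0) + (if j.val = y then cc else 0) := by
        intro j
        rw [hPa j]
        rcases (hrow j.val) with h'
        by_cases hbx : j.val = x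
        · rw [if_pos (h'.2 (Or.inl hbx)), if_pos hbx, if_neg (by omega), add_zero]
        · by_cases hby : j.val = y
          · rw [if_pos (h'.2 (Or.inr hby)), if_neg hbx, if_pos hby, zero_add]
          · rw [if_neg (fun hs => by rcases h'.1 hs with h''|h'' <;> omega), if_neg hbx,
              if_neg hby, add_zero]
      rw [Finset.sum_congr rfl (fun j _ => this j), Finset.sum_add_distrib,
        sum_ite_fin x (by omega) (fun _ => cc), sum_ite_fin y (by omega) (fun _ => cc),
        if_pos h4]
      ring
    · by_cases hak : a ≤ k
      · have : ∀ j : Fin m, Pmat n m k i j = (if j.val = a then cc else 0) := by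
          intro j
          rw [hPa j]
          congr 1
          simp only [eq_iff_iff]
          unfold inSupp bpat
          omega
        rw [Finset.sum_congr rfl (fun j _ => this j), sum_ite_fin a (by omega) (fun _ => cc),
          if_neg h4, if_pos hak]
      · have : ∀ j : Fin m, Pmat n m k i j = 0 := by
          intro j
          rw [hPa j, if_neg]
          unfold inSupp bpat
          omega
        rw [Finset.sum_congr rfl (fun j _ => this j), Finset.sum_const, smul_zero,
          if_neg h4, if_neg hak]
  rw [Finset.sum_congr rfl (fun i _ => rowsum i)]
  rw [Fin.sum_univ_eq_sum_range (fun a => if a < 4 then 2*cc else if a ≤ k then cc else 0) n]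
  have hsplit : ∀ a ∈ Finset.range n, (if a < 4 then 2*cc else if a ≤ k then cc else 0)
      = (if a < 4 then 2*cc else 0) + (if 4 ≤ a ∧ a ≤ k then cc else 0) := by
    intro a _
    split_ifs <;> first | omega | ring
  rw [Finset.sum_congr rfl hsplit, Finset.sum_add_distrib]
  have e1 : ∑ a ∈ Finset.range n, (if a < 4 then 2*cc else 0) = 8*cc := by
    rw [← Finset.sum_filter]
    have hf : (Finset.range n).filter (fun a => a < 4) = Finset.range 4 := by
      ext a; simp only [Finset.mem_filter, Finset.mem_range]; omega
    rw [hf, Finset.sum_const, Finset.card_range, nsmul_eq_mul]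
    push_cast; ring
  have e2 : ∑ a ∈ Finset.range n, (if 4 ≤ a ∧ a ≤ k then cc else 0) = ((k:ℝ)-3)*cc := by
    rw [← Finset.sum_filter]
    have hf : (Finset.range n).filter (fun a => 4 ≤ a ∧ a ≤ k) = Finset.Icc 4 k := by
      ext a; simp only [Finset.mem_filter, Finset.mem_range, Finset.mem_Icc]; omega
    rw [hf, Finset.sum_const, Nat.card_Icc, nsmul_eq_mul]
    have h34 : (k + 1 - 4 : ℕ) = k - 3 := by omega
    rw [h34, Nat.cast_sub (by omega : 3 ≤ k)]
    push_cast; ring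
  rw [e1, e2]
  have hc1 : ((k:ℝ)+5) * cc = 1 := mul_inv_cancel₀ (by positivity)
  nlinarith [hc1]

lemma matrank_add_le {n m : ℕ} (A B : Matrix (Fin n) (Fin m) ℝ) :
    (A + B).rank ≤ A.rank + B.rank := by
  rw [Matrix.rank, Matrix.rank, Matrix.rank, Matrix.mulVecLin_add]
  have hsub : LinearMap.range (A.mulVecLin + B.mulVecLin) ≤
      LinearMap.range A.mulVecLin ⊔ LinearMap.range B.mulVecLin := by
    rintro x ⟨y, rfl⟩
    exact Submodule.add_mem_sup ⟨y, rfl⟩ ⟨y, rfl⟩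
  calc Module.finrank ℝ (LinearMap.range (A.mulVecLin + B.mulVecLin))
      ≤ Module.finrank ℝ ↥(LinearMap.range A.mulVecLin ⊔ LinearMap.range B.mulVecLin) :=
        Submodule.finrank_mono hsub
    _ ≤ _ := Submodule.finrank_add_le_finrank_add_finrank _ _

lemma matrank_sum_le {n m : ℕ} {ι : Type*} [DecidableEq ι] (s : Finset ι)
    (M : ι → Matrix (Fin n) (Fin m) ℝ) :
    (∑ h ∈ s, M h).rank ≤ ∑ h ∈ s, (M h).rank := by
  induction s using Finset.induction with
  | empty => simp
  | insert _ _ hns ih =>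
    rename_i a s'
    rw [Finset.sum_insert hns, Finset.sum_insert hns]
    exact le_trans (matrank_add_le _ _) (by omega)

lemma matrank_vecMulVec_le {n m : ℕ} (w : Fin n → ℝ) (v : Fin m → ℝ) :
    (Matrix.vecMulVec w v).rank ≤ 1 := by
  rw [Matrix.vecMulVec_eq (Fin 1)]
  calc (Matrix.replicateCol (Fin 1) w * Matrix.replicateRow (Fin 1) v).rank ≤ (Matrix.replicateCol (Fin 1) w).rank :=
        Matrix.rank_mul_le_left _ _
    _ ≤ Fintype.card (Fin 1) := Matrix.rank_le_card_width _
    _ = 1 := by simp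

noncomputable def uv : ℕ → ℕ → ℝ := fun t a =>
  if t = 0 then (if a = 0 then 1 else if a = 3 then -1 else 0)
  else if t = 1 then (if a = 1 then 1 else if a = 3 then 1 else 0)
  else if t = 2 then (if a = 2 then 1 else if a = 3 then 1 else 0)
  else if a = t + 1 then 1 else 0

noncomputable def vv : ℕ → ℕ → ℝ := fun t b =>
  if t = 0 then (if b = 0 ∨ b = 1 then 1 else 0)
  else if t = 1 then (if b = 0 ∨ b = 2 then 1 else 0)
  else if t = 2 then (if b = 1 ∨ b = 3 then 1 else 0)
  else if b = t + 1 then 1 else 0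

lemma Pmat_decomp (n m k : ℕ) (h3 : 3 ≤ k) (hn : k < n) (hm : k < m) :
    Pmat n m k = ∑ h : Fin k, Matrix.vecMulVec (fun i => uv h.val i.val)
      (fun j => ((k:ℝ)+5)⁻¹ * vv h.val j.val) := by
  classical
  set cc : ℝ := ((k:ℝ)+5)⁻¹ with hcc
  ext i j
  have hR : (∑ h : Fin k, Matrix.vecMulVec (fun i => uv h.val i.val)
      (fun j => cc * vv h.val j.val)) i j
      = cc * ∑ t ∈ Finset.range k, uv t i.val * vv t j.val := by
    rw [Matrix.sum_apply]
    simp only [Matrix.vecMulVec_apply]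
    rw [Finset.mul_sum, ← Fin.sum_univ_eq_sum_range (fun t => cc * (uv t i.val * vv t j.val)) k]
    apply Finset.sum_congr rfl
    intro h _
    ring
  rw [hR]
  have htail : ∑ t ∈ Finset.Ico 3 k, uv t i.val * vv t j.val =
      (if 4 ≤ i.val ∧ i.val ≤ k ∧ i.val = j.val then 1 else 0) := by
    have hpt : ∀ t ∈ Finset.Ico 3 k, uv t i.val * vv t j.val =
        (if i.val = t + 1 ∧ j.val = t + 1 then 1 else 0) := by
      intro t ht
      have ht' := Finset.mem_Ico.1 ht
      have hu : uv t i.val = if i.val = t + 1 then 1 else 0 := by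
        unfold uv
        rw [if_neg (show ¬t = 0 by omega), if_neg (show ¬t = 1 by omega),
          if_neg (show ¬t = 2 by omega)]
      have hv : vv t j.val = if j.val = t + 1 then 1 else 0 := by
        unfold vv
        rw [if_neg (show ¬t = 0 by omega), if_neg (show ¬t = 1 by omega),
          if_neg (show ¬t = 2 by omega)]
      rw [hu, hv]
      split_ifs <;> first | omega | ring
    rw [Finset.sum_congr rfl hpt]
    by_cases hd : 4 ≤ i.val ∧ i.val ≤ k ∧ i.val = j.val
    · have hpt2 : ∀ t ∈ Finset.Ico 3 k, (if i.val = t + 1 ∧ j.val = t + 1 then (1:ℝ) else 0) =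
          (if t = i.val - 1 then 1 else 0) := by
        intro t ht
        have ht' := Finset.mem_Ico.1 ht
        split_ifs <;> first | rfl | (exfalso; omega)
      rw [Finset.sum_congr rfl hpt2,
        Finset.sum_ite_eq' (Finset.Ico 3 k) (i.val-1) (fun _ => (1:ℝ)),
        if_pos (Finset.mem_Ico.2 (by omega)), if_pos hd]
    · rw [if_neg hd]
      apply Finset.sum_eq_zero
      intro t ht
      have ht' := Finset.mem_Ico.1 ht
      rw [if_neg (by omega)]
  rw [← Finset.sum_range_add_sum_Ico _ (by omega : 3 ≤ k), htail,
    Finset.sum_range_succ, Finset.sum_range_succ, Finset.sum_range_succ,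
    Finset.sum_range_zero]
  have hP : Pmat n m k i j = if inSupp k i.val j.val then cc else 0 := by
    unfold Pmat; simp only [Matrix.of_apply]; rfl
  rw [hP]
  unfold uv vv inSupp bpat
  norm_num
  split_ifs <;> first | omega | ring

lemma Pmat_rank_le (n m k : ℕ) (h3 : 3 ≤ k) (hn : k < n) (hm : k < m) :
    (Pmat n m k).rank ≤ k := by
  classical
  rw [Pmat_decomp n m k h3 hn hm]
  calc (∑ h : Fin k, Matrix.vecMulVec (fun i : Fin n => uv h.val i.val)
        (fun j : Fin m => ((k:ℝ)+5)⁻¹ * vv h.val j.val)).rank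
      ≤ ∑ h : Fin k, (Matrix.vecMulVec (fun i : Fin n => uv h.val i.val)
        (fun j : Fin m => ((k:ℝ)+5)⁻¹ * vv h.val j.val)).rank := matrank_sum_le _ _
    _ ≤ ∑ _h : Fin k, 1 := Finset.sum_le_sum (fun h _ => matrank_vecMulVec_le _ _)
    _ = k := by simp

lemma Pmat_rank_ge (n m k : ℕ) (h3 : 3 ≤ k) (hn : k < n) (hm : k < m) :
    k ≤ (Pmat n m k).rank := by
  classical
  set cc : ℝ := ((k:ℝ)+5)⁻¹ with hcc
  have hccne : cc ≠ 0 := ne_of_gt (cpos k)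
  have hne : (0:ℕ) < n := by omega
  have hme : (0:ℕ) < m := by omega
  set fi : ℕ → Fin n := fun a => if h : a < n then ⟨a, h⟩ else ⟨0, hne⟩ with hfi
  set fj : ℕ → Fin m := fun a => if h : a < m then ⟨a, h⟩ else ⟨0, hme⟩ with hfj
  have hfiv : ∀ a, a ≤ k → (fi a).val = a := by
    intro a ha; simp only [hfi]; rw [dif_pos (by omega)]
  have hfjv : ∀ a, a ≤ k → (fj a).val = a := by
    intro a ha; simp only [hfj]; rw [dif_pos (by omega)]
  set γ : Fin k → ℕ := fun t => if t.val < 3 then t.val else t.val + 1 with hγ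
  have hγk : ∀ t : Fin k, γ t ≤ k := by
    intro t; simp only [hγ]; have := t.isLt; split_ifs <;> omega
  have hγf : ∀ t : Fin k, (γ t = 0 ↔ t.val = 0) ∧ (γ t = 1 ↔ t.val = 1) ∧
      (γ t = 2 ↔ t.val = 2) ∧ (γ t ≠ 3) ∧ (∀ a, 4 ≤ a → (γ t = a ↔ t.val + 1 = a)) := by
    intro t; simp only [hγ]
    by_cases h : t.val < 3
    · rw [if_pos h]; exact ⟨by omega, by omega, by omega, by omega, fun a ha => by omega⟩
    · rw [if_neg h]; exact ⟨by omega, by omega, by omega, by omega, fun a ha => by omega⟩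
  set cols : Fin k → (Fin n → ℝ) := fun t => fun i => Pmat n m k i (fj (γ t)) with hcols
  have hcolv : ∀ (t : Fin k) (i : Fin n), cols t i = (if inSupp k i.val (γ t) then cc else 0) := by
    intro t i
    simp only [hcols]
    unfold Pmat
    simp only [Matrix.of_apply]
    rw [hfjv _ (hγk t)]
  have hmem : ∀ t : Fin k, cols t ∈ LinearMap.range (Pmat n m k).mulVecLin := by
    intro t
    refine ⟨Pi.single (fj (γ t)) 1, ?_⟩
    rw [Matrix.mulVecLin_apply, Matrix.mulVec_single]
    funext i
    simp [hcols]
  have hind : LinearIndependent ℝ cols := by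
    rw [Fintype.linearIndependent_iff]
    intro g hsum
    have hrow : ∀ i : Fin n, ∑ t : Fin k, g t * cols t i = 0 := by
      intro i
      have := congrFun hsum i
      rw [Finset.sum_apply] at this
      simpa [smul_eq_mul] using this
    -- row equations
    have hrow' : ∀ (a : ℕ), a ≤ k → ∑ t : Fin k, g t * (if inSupp k a (γ t) then cc else 0) = 0 := by
      intro a ha
      have := hrow (fi a)
      rw [Finset.sum_congr rfl (fun t _ => by rw [hcolv t (fi a), hfiv a ha])] at this
      exact this
    have e2 : cc * g ⟨1, by omega⟩ = 0 := by
      have h := hrow' 2 (by omega)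
      rw [Finset.sum_congr rfl (fun t _ => show g t * (if inSupp k 2 (γ t) then cc else 0)
          = (if t.val = 1 then cc * g t else 0) from ?_)] at h
      · rw [sum_ite_fin 1 (by omega) (fun t => cc * g t)] at h
        exact h
      · obtain ⟨i0, i1, i2, i3, id4⟩ := hγf t
        have hs : inSupp k 2 (γ t) ↔ (γ t = 1 ∨ γ t = 3) := by
          unfold inSupp bpat; omega
        simp only [hs]
        split_ifs <;> first | (exfalso; omega) | ring
    have e0 : cc * g ⟨0, by omega⟩ + cc * g ⟨1, by omega⟩ = 0 := by
      have h := hrow' 0 (by omega)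
      rw [Finset.sum_congr rfl (fun t _ => show g t * (if inSupp k 0 (γ t) then cc else 0)
          = (if t.val = 0 then cc * g t else 0) + (if t.val = 1 then cc * g t else 0) from ?_)] at h
      · rw [Finset.sum_add_distrib, sum_ite_fin 0 (by omega) (fun t => cc * g t),
          sum_ite_fin 1 (by omega) (fun t => cc * g t)] at h
        exact h
      · obtain ⟨i0, i1, i2, i3, id4⟩ := hγf t
        have hs : inSupp k 0 (γ t) ↔ (γ t = 0 ∨ γ t = 1) := by
          unfold inSupp bpat; omega
        simp only [hs]
        split_ifs <;> first | (exfalso; omega) | ring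
    have e1 : cc * g ⟨0, by omega⟩ + cc * g ⟨2, by omega⟩ = 0 := by
      have h := hrow' 1 (by omega)
      rw [Finset.sum_congr rfl (fun t _ => show g t * (if inSupp k 1 (γ t) then cc else 0)
          = (if t.val = 0 then cc * g t else 0) + (if t.val = 2 then cc * g t else 0) from ?_)] at h
      · rw [Finset.sum_add_distrib, sum_ite_fin 0 (by omega) (fun t => cc * g t),
          sum_ite_fin 2 (by omega) (fun t => cc * g t)] at h
        exact h
      · obtain ⟨i0, i1, i2, i3, id4⟩ := hγf t
        have hs : inSupp k 1 (γ t) ↔ (γ t = 0 ∨ γ t = 2) := by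
          unfold inSupp bpat; omega
        simp only [hs]
        split_ifs <;> first | (exfalso; omega) | ring
    have ed : ∀ (a : ℕ) (ha4 : 4 ≤ a) (hak : a ≤ k), cc * g ⟨a - 1, by omega⟩ = 0 := by
      intro a ha4 hak
      have h := hrow' a hak
      rw [Finset.sum_congr rfl (fun t _ => show g t * (if inSupp k a (γ t) then cc else 0)
          = (if t.val = a - 1 then cc * g t else 0) from ?_)] at h
      · rw [sum_ite_fin (a-1) (by omega) (fun t => cc * g t)] at h
        exact h
      · obtain ⟨i0, i1, i2, i3, id4⟩ := hγf t
        have hs : inSupp k a (γ t) ↔ (γ t = a) := by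
          unfold inSupp bpat; omega
        have := (id4 a ha4)
        simp only [hs]
        split_ifs <;> first | (exfalso; omega) | ring
    intro t
    by_cases ht3 : t.val < 3
    · have hg1 : g ⟨1, by omega⟩ = 0 := by
        have := mul_eq_zero.1 e2
        tauto
      have hg0 : g ⟨0, by omega⟩ = 0 := by
        rw [hg1, mul_zero, add_zero] at e0
        have := mul_eq_zero.1 e0
        tauto
      have hg2 : g ⟨2, by omega⟩ = 0 := by
        rw [hg0, mul_zero, zero_add] at e1
        have := mul_eq_zero.1 e1
        tauto
      rcases (show t.val = 0 ∨ t.val = 1 ∨ t.val = 2 by omega) with h|h|h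
      · rw [show t = (⟨0, by omega⟩ : Fin k) from Fin.ext (by simp [h])]; exact hg0
      · rw [show t = (⟨1, by omega⟩ : Fin k) from Fin.ext (by simp [h])]; exact hg1
      · rw [show t = (⟨2, by omega⟩ : Fin k) from Fin.ext (by simp [h])]; exact hg2
    · have := ed (t.val + 1) (by omega) (by omega)
      have ht : (⟨t.val + 1 - 1, by omega⟩ : Fin k) = t := Fin.ext (by simp)
      rw [ht] at this
      have := mul_eq_zero.1 this
      tauto
  -- conclude
  set cols' : Fin k → ↥(LinearMap.range (Pmat n m k).mulVecLin) :=
    fun t => ⟨cols t, hmem t⟩ with hcols'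
  have hind' : LinearIndependent ℝ cols' := by
    apply LinearIndependent.of_comp (LinearMap.range (Pmat n m k).mulVecLin).subtype
    have : ((LinearMap.range (Pmat n m k).mulVecLin).subtype ∘ cols') = cols := by
      funext t; rfl
    rw [this]
    exact hind
  have := hind'.fintype_card_le_finrank
  simpa [Matrix.rank] using this

lemma Pmat_rank (n m k : ℕ) (h3 : 3 ≤ k) (hn : k < n) (hm : k < m) :
    (Pmat n m k).rank = k :=
  le_antisymm (Pmat_rank_le n m k h3 hn hm) (Pmat_rank_ge n m k h3 hn hm)

lemma mem_fact {n m : ℕ} (P : Matrix (Fin n) (Fin m) ℝ) (hP : ∀ i j, 0 ≤ P i j) :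
    ∃ (c : Fin (n*m) → Fin n → ℝ) (r : Fin (n*m) → Fin m → ℝ),
      (∀ h i, 0 ≤ c h i) ∧ (∀ h j, 0 ≤ r h j) ∧
      P = ∑ h, Matrix.vecMulVec (c h) (r h) := by
  classical
  set e : Fin n × Fin m ≃ Fin (n*m) := finProdFinEquiv with he
  refine ⟨fun h i => if i = (e.symm h).1 then 1 else 0,
    fun h j => if j = (e.symm h).2 then P (e.symm h).1 (e.symm h).2 else 0,
    ?_, ?_, ?_⟩
  · intro h i; dsimp only; split_ifs <;> norm_num
  · intro h j; dsimp only; split_ifs with h'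
    · exact hP _ _
    · exact le_refl 0
  · ext i j
    rw [Matrix.sum_apply]
    rw [← Equiv.sum_comp e (fun h => Matrix.vecMulVec
      (fun i => if i = (e.symm h).1 then (1:ℝ) else 0)
      (fun j => if j = (e.symm h).2 then P (e.symm h).1 (e.symm h).2 else 0) i j)]
    simp only [Matrix.vecMulVec_apply, Equiv.symm_apply_apply]
    rw [Fintype.sum_prod_type]
    dsimp only
    rw [Finset.sum_eq_single i]
    · rw [Finset.sum_eq_single j]
      · simp
      · intro b _ hb
        rw [if_neg (show ¬ j = b from fun h' => hb h'.symm), mul_zero]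
      · intro hi; exact absurd (Finset.mem_univ _) hi
    · intro b _ hb
      apply Finset.sum_eq_zero
      intro j' _
      rw [if_neg (show ¬ i = b from fun h' => hb h'.symm), zero_mul]
    · intro hi; exact absurd (Finset.mem_univ _) hi

/-- The nonnegative rank: least `k` such that `P` is a sum of `k` nonnegative dyads. -/
noncomputable def nnRank {n m : ℕ} (P : Matrix (Fin n) (Fin m) ℝ) : ℕ :=
  sInf {k : ℕ | ∃ (c : Fin k → Fin n → ℝ) (r : Fin k → Fin m → ℝ),
    (∀ h i, 0 ≤ c h i) ∧ (∀ h j, 0 ≤ r h j) ∧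
    P = ∑ h, Matrix.vecMulVec (c h) (r h)}

/-- Frobenius distance between two matrices. -/
noncomputable def frobDist {n m : ℕ} (P N : Matrix (Fin n) (Fin m) ℝ) : ℝ :=
  Real.sqrt (∑ i, ∑ j, (P i j - N i j) ^ 2)

lemma nnRank_Pmat (n m k : ℕ) (h3 : 3 ≤ k) (hn : k < n) (hm : k < m) :
    k < nnRank (Pmat n m k) := by
  classical
  unfold nnRank
  have hmem : (n*m) ∈ {k' : ℕ | ∃ (c : Fin k' → Fin n → ℝ) (r : Fin k' → Fin m → ℝ),
      (∀ h i, 0 ≤ c h i) ∧ (∀ h j, 0 ≤ r h j) ∧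
      Pmat n m k = ∑ h, Matrix.vecMulVec (c h) (r h)} := mem_fact _ (Pmat_nonneg n m k)
  have hlow : ∀ x ∈ {k' : ℕ | ∃ (c : Fin k' → Fin n → ℝ) (r : Fin k' → Fin m → ℝ),
      (∀ h i, 0 ≤ c h i) ∧ (∀ h j, 0 ≤ r h j) ∧
      Pmat n m k = ∑ h, Matrix.vecMulVec (c h) (r h)}, k + 1 ≤ x := by
    rintro x ⟨c, r, hc, hr, hf⟩
    exact count h3 hn hm c r hc hr hf
  exact lt_of_lt_of_le (Nat.lt_succ_self k) (le_csInf ⟨_, hmem⟩ hlow)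

theorem mixture_not_dense (n m k : ℕ) (hk2 : 2 < k) (hk : k < min n m) :
    ∃ P : Matrix (Fin n) (Fin m) ℝ,
      (∀ i j, 0 ≤ P i j) ∧ (∑ i, ∑ j, P i j) = 1 ∧
      P.rank = k ∧ k < nnRank P ∧
      ¬ ∃ Q : ℕ → Matrix (Fin n) (Fin m) ℝ,
        (∀ r, (Q r).rank = k ∧ nnRank (Q r) = k) ∧
        (∀ i j, Tendsto (fun r => Q r i j) atTop (𝓝 (P i j))) := by
  classical
  have h3 : 3 ≤ k := hk2
  have hn : k < n := lt_of_lt_of_le hk (min_le_left _ _)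
  have hm : k < m := lt_of_lt_of_le hk (min_le_right _ _)
  refine ⟨Pmat n m k, Pmat_nonneg n m k, Pmat_sum n m k h3 hn hm,
    Pmat_rank n m k h3 hn hm, nnRank_Pmat n m k h3 hn hm, ?_⟩
  rintro ⟨Q, hQ, hconv⟩
  -- extract exact factorizations of size k
  have hfact : ∀ rr : ℕ, ∃ (c : Fin k → Fin n → ℝ) (r : Fin k → Fin m → ℝ),
      (∀ h i, 0 ≤ c h i) ∧ (∀ h j, 0 ≤ r h j) ∧
      Q rr = ∑ h, Matrix.vecMulVec (c h) (r h) := by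
    intro rr
    have hQr := (hQ rr).2
    unfold nnRank at hQr
    by_cases hne : {k' : ℕ | ∃ (c : Fin k' → Fin n → ℝ) (r : Fin k' → Fin m → ℝ),
        (∀ h i, 0 ≤ c h i) ∧ (∀ h j, 0 ≤ r h j) ∧
        Q rr = ∑ h, Matrix.vecMulVec (c h) (r h)}.Nonempty
    · have hmem := Nat.sInf_mem hne
      rw [hQr] at hmem
      exact hmem
    · rw [Set.not_nonempty_iff_eq_empty] at hne
      rw [hne, Nat.sInf_empty] at hQr
      omega
  choose C R hC hR hQeq using hfact
  -- uniform bound on entries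
  have hBex : ∀ (i : Fin n) (j : Fin m), ∃ b : ℝ, ∀ rr, Q rr i j ≤ b := by
    intro i j
    obtain ⟨b, hb⟩ := (hconv i j).bddAbove_range
    exact ⟨b, fun rr => hb ⟨rr, rfl⟩⟩
  choose bb hbb using hBex
  set B : ℝ := ∑ i, ∑ j, max (bb i j) 0 with hB
  have hrow0 : ∀ i : Fin n, 0 ≤ ∑ j, max (bb i j) 0 :=
    fun i => Finset.sum_nonneg (fun j _ => le_max_right _ _)
  have hBnn : ∀ (i : Fin n) (j : Fin m), max (bb i j) 0 ≤ B := by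
    intro i j
    calc max (bb i j) 0 ≤ ∑ j', max (bb i j') 0 :=
          Finset.single_le_sum (fun j' (_ : j' ∈ Finset.univ) => le_max_right (bb i j') 0)
            (Finset.mem_univ j)
      _ ≤ B := Finset.single_le_sum (fun i' (_ : i' ∈ Finset.univ) => hrow0 i')
            (Finset.mem_univ i)
  have hQB : ∀ rr (i : Fin n) (j : Fin m), Q rr i j ≤ B :=
    fun rr i j => (hbb i j rr).trans ((le_max_left _ _).trans (hBnn i j))
  -- normalize
  have hnon : (Finset.univ : Finset (Fin n)).Nonempty :=
    ⟨⟨0, by omega⟩, Finset.mem_univ _⟩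
  set M : ℕ → Fin k → ℝ := fun rr h => Finset.univ.sup' hnon (C rr h) with hM
  have hCleM : ∀ rr h i, C rr h i ≤ M rr h :=
    fun rr h i => Finset.le_sup' _ (Finset.mem_univ i)
  have hM0 : ∀ rr h, 0 ≤ M rr h :=
    fun rr h => le_trans (hC rr h ⟨0, by omega⟩) (hCleM rr h _)
  have hMat : ∀ rr h, ∃ i0, M rr h = C rr h i0 := by
    intro rr h
    obtain ⟨i0, _, hi0⟩ := Finset.exists_mem_eq_sup' hnon (C rr h)
    exact ⟨i0, hi0⟩
  set Cn : ℕ → Fin k → Fin n → ℝ :=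
    fun rr h i => if M rr h = 0 then 0 else C rr h i / M rr h with hCn
  set Rn : ℕ → Fin k → Fin m → ℝ := fun rr h j => M rr h * R rr h j with hRn
  have hdyad : ∀ rr h, Matrix.vecMulVec (Cn rr h) (Rn rr h)
      = Matrix.vecMulVec (C rr h) (R rr h) := by
    intro rr h
    ext i j
    simp only [Matrix.vecMulVec_apply, hCn, hRn]
    by_cases hz : M rr h = 0
    · rw [if_pos hz, hz]
      have hci : C rr h i = 0 := le_antisymm (by rw [← hz]; exact hCleM rr h i) (hC rr h i)
      rw [hci]
      ring
    · rw [if_neg hz]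
      field_simp
  have hQeq' : ∀ rr, Q rr = ∑ h, Matrix.vecMulVec (Cn rr h) (Rn rr h) := by
    intro rr
    rw [hQeq rr]
    exact (Finset.sum_congr rfl (fun h _ => (hdyad rr h))).symm
  have hCn0 : ∀ rr h i, 0 ≤ Cn rr h i ∧ Cn rr h i ≤ 1 := by
    intro rr h i
    simp only [hCn]
    by_cases hz : M rr h = 0
    · rw [if_pos hz]; norm_num
    · rw [if_neg hz]
      have hMpos : 0 < M rr h := lt_of_le_of_ne (hM0 rr h) (Ne.symm hz)
      exact ⟨div_nonneg (hC rr h i) (hM0 rr h), (div_le_one hMpos).2 (hCleM rr h i)⟩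
  have hRn0 : ∀ rr h j, 0 ≤ Rn rr h j :=
    fun rr h j => mul_nonneg (hM0 rr h) (hR rr h j)
  have hRnB : ∀ rr h j, Rn rr h j ≤ B := by
    intro rr h j
    obtain ⟨i0, hi0⟩ := hMat rr h
    have step1 : Rn rr h j = C rr h i0 * R rr h j := by
      simp only [hRn]; rw [hi0]
    have step2 : C rr h i0 * R rr h j ≤ ∑ h', C rr h' i0 * R rr h' j :=
      Finset.single_le_sum (fun h' (_ : h' ∈ Finset.univ) =>
        mul_nonneg (hC rr h' i0) (hR rr h' j)) (Finset.mem_univ h)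
    have step3 : ∑ h', C rr h' i0 * R rr h' j = Q rr i0 j := by
      rw [hQeq rr, Matrix.sum_apply]
      simp [Matrix.vecMulVec_apply]
    rw [step1]
    rw [step3] at step2
    exact step2.trans (hQB rr i0 j)
  -- compactness
  set x : ℕ → (Fin k → Fin n → ℝ) × (Fin k → Fin m → ℝ) := fun rr => (Cn rr, Rn rr) with hx
  have hxK : ∀ rr, x rr ∈ Set.Icc
      (⟨fun _ _ => 0, fun _ _ => 0⟩ : (Fin k → Fin n → ℝ) × (Fin k → Fin m → ℝ))
      ⟨fun _ _ => 1, fun _ _ => B⟩ := by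
    intro rr
    exact Set.mem_Icc.2 ⟨⟨fun h i => (hCn0 rr h i).1, fun h j => hRn0 rr h j⟩,
      ⟨fun h i => (hCn0 rr h i).2, fun h j => hRnB rr h j⟩⟩
  obtain ⟨L, hLmem, φ, hφ, hxconv⟩ := (isCompact_Icc).tendsto_subseq hxK
  have hL0 := (Set.mem_Icc.1 hLmem).1
  have hPeq : Pmat n m k = ∑ h, Matrix.vecMulVec (L.1 h) (L.2 h) := by
    ext i j
    have hF : Continuous (fun p : (Fin k → Fin n → ℝ) × (Fin k → Fin m → ℝ) =>
        ∑ h, p.1 h i * p.2 h j) := by fun_prop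
    have h1 : Tendsto (fun rr => ∑ h, (x (φ rr)).1 h i * (x (φ rr)).2 h j) atTop
        (𝓝 (∑ h, L.1 h i * L.2 h j)) := (hF.tendsto L).comp hxconv
    have h2 : ∀ rr, Q (φ rr) i j = ∑ h, (x (φ rr)).1 h i * (x (φ rr)).2 h j := by
      intro rr
      rw [hQeq' (φ rr), Matrix.sum_apply]
      simp [Matrix.vecMulVec_apply, hx]
    have h3' : Tendsto (fun rr => Q (φ rr) i j) atTop (𝓝 (Pmat n m k i j)) :=
      (hconv i j).comp hφ.tendsto_atTop
    have h4 : Tendsto (fun rr => Q (φ rr) i j) atTop (𝓝 (∑ h, L.1 h i * L.2 h j)) :=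
      h1.congr (fun rr => (h2 rr).symm)
    have h5 := tendsto_nhds_unique h3' h4
    rw [Matrix.sum_apply]
    simp only [Matrix.vecMulVec_apply]
    exact h5
  have := count h3 hn hm L.1 L.2 (fun h i => hL0.1 h i) (fun h j => hL0.2 h j) hPeq
  omega
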